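/- Let C : ℕ → ℕ be a sequence with C(0) = 1, and define E : ℕ → ℕ by E(n) = Σ_{k=0}^{n} Σ_{γ} Π_{i=0}^{k} C(γ_i), where the inner sum is over all weak compositions γ = (γ_0, …, γ_k) of n − k into k + 1 nonnegative parts (i.e. γ : Fin(k+1) → ℕ with Σ_i γ_i = n − k). Then E(0) = 1 and, for every n ≥ 1, E(n) = C(n) + Σ_{i=0}^{n-1} C(i)·E(n−1−i). -/

import Mathlib

open Finset

private def Fsum (C : ℕ → ℕ) (k m : ℕ) : ℕ :=
  ∑ γ ∈ Finset.Nat.antidiagonalTuple (k + 1) m, ∏ i, C (γ i)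

private lemma Fsum_zero (C : ℕ → ℕ) (m : ℕ) : Fsum C 0 m = C m := by
  simp [Fsum, Finset.Nat.antidiagonalTuple_one]

private lemma Fsum_succ (C : ℕ → ℕ) (k m : ℕ) :
    Fsum C (k + 1) m = ∑ p ∈ Finset.HasAntidiagonal.antidiagonal m, C p.1 * Fsum C k p.2 := by
  unfold Fsum
  simp_rw [Finset.mul_sum]
  rw [Finset.sum_sigma']
  refine Finset.sum_nbij' (fun γ => ⟨(γ 0, ∑ i, Fin.tail γ i), Fin.tail γ⟩)
    (fun x => Fin.cons x.1.1 x.2) ?_ ?_ ?_ ?_ ?_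
  · intro γ hγ
    rw [Finset.Nat.mem_antidiagonalTuple] at hγ
    simp only [Finset.mem_sigma, Finset.HasAntidiagonal.mem_antidiagonal,
      Finset.Nat.mem_antidiagonalTuple]
    refine ⟨?_, trivial⟩
    rw [← hγ]
    exact (Fin.sum_univ_succ γ).symm
  · intro x hx
    simp only [Finset.mem_sigma, Finset.HasAntidiagonal.mem_antidiagonal,
      Finset.Nat.mem_antidiagonalTuple] at hx
    rw [Finset.Nat.mem_antidiagonalTuple, Fin.sum_univ_succ]
    simp only [Fin.cons_zero, Fin.cons_succ]
    rw [hx.2, hx.1]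
  · intro γ hγ
    exact Fin.cons_self_tail γ
  · intro x hx
    simp only [Finset.mem_sigma, Finset.HasAntidiagonal.mem_antidiagonal,
      Finset.Nat.mem_antidiagonalTuple] at hx
    obtain ⟨p, δ⟩ := x
    simp only [Fin.tail_cons, Fin.cons_zero]
    have h2 : ∑ i, δ i = p.2 := hx.2
    rw [h2]
  · intro γ hγ
    rw [Fin.prod_univ_succ]
    rfl

private lemma Fsum_succ' (C : ℕ → ℕ) (k m : ℕ) :
    Fsum C (k + 1) m = ∑ i ∈ Finset.range (m + 1), C i * Fsum C k (m - i) := by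
  rw [Fsum_succ, Finset.Nat.sum_antidiagonal_eq_sum_range_succ_mk]

private lemma tri (g : ℕ → ℕ → ℕ) (n : ℕ) :
    ∑ k ∈ Finset.range n, ∑ i ∈ Finset.range (n - k), g k i
      = ∑ i ∈ Finset.range n, ∑ k ∈ Finset.range (n - i), g k i := by
  have h : ∀ (a : ℕ) (g' : ℕ → ℕ),
      ∑ i ∈ Finset.range (n - a), g' i
        = ∑ i ∈ Finset.range n, if a + i < n then g' i else 0 := by
    intro a g'
    rw [← Finset.sum_filter]
    apply Finset.sum_congr _ (fun _ _ => rfl)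
    ext i
    simp only [Finset.mem_filter, Finset.mem_range]
    omega
  simp_rw [h]
  rw [Finset.sum_comm]
  refine Finset.sum_congr rfl fun i _ => Finset.sum_congr rfl fun k _ => ?_
  rw [Nat.add_comm k i]

/-- if `C 0 = 1` and
`E n = Σ_{k=0}^{n} Σ_{γ ⊨ n-k into k+1 parts} Π_i C (γ i)` (dimensions of a composition
over a comb coalgebra), then `E 0 = 1` and `E n = C n + Σ_{i=0}^{n-1} C i * E (n-1-i)`
for `n ≥ 1`. -/
theorem comb_composition_recursion
    (C : ℕ → ℕ) (hC : C 0 = 1)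
    (E : ℕ → ℕ)
    (hE : ∀ n, E n = ∑ k ∈ Finset.range (n + 1),
      ∑ γ ∈ Finset.Nat.antidiagonalTuple (k + 1) (n - k), ∏ i, C (γ i)) :
    E 0 = 1 ∧ ∀ n, 1 ≤ n → E n = C n + ∑ i ∈ Finset.range n, C i * E (n - 1 - i) := by
  have hE' : ∀ n, E n = ∑ k ∈ Finset.range (n + 1), Fsum C k (n - k) := hE
  constructor
  · rw [hE' 0]
    simp [Fsum_zero, hC]
  · intro n hn
    obtain ⟨m, rfl⟩ : ∃ m, n = m + 1 := ⟨n - 1, by omega⟩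
    rw [hE' (m + 1), Finset.sum_range_succ']
    have h0 : Fsum C 0 (m + 1 - 0) = C (m + 1) := by
      rw [Nat.sub_zero, Fsum_zero]
    rw [h0, add_comm]
    congr 1
    have step : ∀ k ∈ Finset.range (m + 1),
        Fsum C (k + 1) (m + 1 - (k + 1))
          = ∑ i ∈ Finset.range (m + 1 - k), C i * Fsum C k (m - k - i) := by
      intro k hk
      rw [Finset.mem_range] at hk
      rw [Fsum_succ']
      have h1 : m + 1 - (k + 1) = m - k := by omega
      have h2 : m - k + 1 = m + 1 - k := by omega
      rw [h1, h2]
    rw [Finset.sum_congr rfl step, tri]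
    refine Finset.sum_congr rfl fun i hi => ?_
    rw [Finset.mem_range] at hi
    have h3 : m + 1 - 1 - i = m - i := by omega
    rw [h3, hE' (m - i), Finset.mul_sum]
    have h4 : m - i + 1 = m + 1 - i := by omega
    rw [h4]
    refine Finset.sum_congr rfl fun k hk => ?_
    congr 2
    omega
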